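/- Let U be a finite-dimensional commutative ℂ-algebra with a fixed basis, and suppose a distinguished element E ∈ U acts by multiplication with pairwise distinct eigenvalues w₁, …, w_μ. Then U has no nonzero nilpotent elements, i.e., U ≅ ℂ^μ as ℂ-algebras. -/

import Mathlib

theorem stmt_11 (U : Type*) [CommRing U] [Algebra ℂ U]
    [FiniteDimensional ℂ U]
    (μ : ℕ) (hμ : μ = Module.finrank ℂ U)
    (b : Module.Basis (Fin μ) ℂ U) (E : U) (w : Fin μ → ℂ)
    (hw : Function.Injective w)
    (heig : ∀ i, E * b i = w i • b i) :
    IsReduced U ∧ Nonempty (U ≃ₐ[ℂ] (Fin μ → ℂ)) := by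
  classical
  -- orthogonality of distinct basis vectors
  have horth : ∀ i j : Fin μ, i ≠ j → b i * b j = 0 := by
    intro i j hij
    have h1 : E * (b i * b j) = w i • (b i * b j) := by
      rw [← mul_assoc, heig i, smul_mul_assoc]
    have h2 : E * (b i * b j) = w j • (b i * b j) := by
      rw [mul_comm (b i) (b j), ← mul_assoc, heig j, smul_mul_assoc, mul_comm]
    have h3 : (w i - w j) • (b i * b j) = 0 := by
      rw [sub_smul, ← h1, ← h2, sub_self]
    rcases smul_eq_zero.mp h3 with h | h
    · exact absurd (hw (sub_eq_zero.mp h)) hij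
    · exact h
  -- action of E in coordinates
  have hEx : ∀ x : U, E * x = ∑ j, (w j * b.repr x j) • b j := by
    intro x
    conv_lhs => rw [← b.sum_repr x]
    rw [Finset.mul_sum]
    refine Finset.sum_congr rfl fun j _ => ?_
    rw [mul_smul_comm, heig j, smul_smul, mul_comm]
  -- squares are diagonal
  have hdiag : ∀ i j : Fin μ, j ≠ i → b.repr (b i * b i) j = 0 := by
    intro i j hji
    have h1 : E * (b i * b i) = w i • (b i * b i) := by
      rw [← mul_assoc, heig i, smul_mul_assoc]
    have h2 : ∑ k, ((w k - w i) * b.repr (b i * b i) k) • b k = 0 := by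
      have h3 := hEx (b i * b i)
      rw [h1] at h3
      have h4 : w i • (b i * b i) = ∑ k, (w i * b.repr (b i * b i) k) • b k := by
        conv_lhs => rw [← b.sum_repr (b i * b i)]
        rw [Finset.smul_sum]
        exact Finset.sum_congr rfl fun k _ => by rw [smul_smul]
      calc ∑ k, ((w k - w i) * b.repr (b i * b i) k) • b k
          = (∑ k, (w k * b.repr (b i * b i) k) • b k)
            - ∑ k, (w i * b.repr (b i * b i) k) • b k := by
            rw [← Finset.sum_sub_distrib]
            exact Finset.sum_congr rfl fun k _ => by rw [← sub_smul, sub_mul]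
        _ = 0 := by rw [← h3, ← h4, sub_self]
    have h5 := Fintype.linearIndependent_iff.mp b.linearIndependent _ h2 j
    have h6 : w j - w i ≠ 0 := sub_ne_zero.mpr (fun h => hji (hw h))
    exact (mul_eq_zero.mp h5).resolve_left h6
  set c : Fin μ → ℂ := fun i => b.repr (b i * b i) i with hc
  have hsq : ∀ i, b i * b i = c i • b i := by
    intro i
    conv_lhs => rw [← b.sum_repr (b i * b i)]
    rw [Finset.sum_eq_single i]
    · intro k _ hk
      rw [hdiag i k hk, zero_smul]
    · intro h; exact absurd (Finset.mem_univ i) h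
  -- product formula
  have hmul : ∀ x y : U, x * y = ∑ i, (b.repr x i * b.repr y i * c i) • b i := by
    intro x y
    conv_lhs => rw [← b.sum_repr x, ← b.sum_repr y]
    rw [Finset.sum_mul_sum]
    refine Finset.sum_congr rfl fun i _ => ?_
    rw [Finset.sum_eq_single i]
    · rw [smul_mul_smul_comm, hsq i, smul_smul, mul_assoc]
    · intro k _ hk
      rw [smul_mul_smul_comm, horth i k (Ne.symm hk), smul_zero]
    · intro h; exact absurd (Finset.mem_univ i) h
  have hreprmul : ∀ (x y : U) (i : Fin μ),
      b.repr (x * y) i = b.repr x i * b.repr y i * c i := by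
    intro x y i
    rw [hmul x y]
    rw [Module.Basis.repr_sum_self]
  -- c i is invertible, with inverse repr 1 i
  have hone : ∀ i, b.repr (1 : U) i * c i = 1 := by
    intro i
    have h1 : b.repr ((1 : U) * b i) i = b.repr (1 : U) i * b.repr (b i) i * c i :=
      hreprmul 1 (b i) i
    rw [one_mul] at h1
    simp only [Module.Basis.repr_self, Finsupp.single_eq_same, mul_one] at h1
    exact h1.symm
  have hcne : ∀ i, c i ≠ 0 := by
    intro i h
    have := hone i
    rw [h, mul_zero] at this
    exact zero_ne_one this
  -- the algebra homomorphism
  let φ : U →ₐ[ℂ] (Fin μ → ℂ) :=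
  { toFun := fun x i => c i * b.repr x i
    map_one' := by
      funext i
      show c i * b.repr 1 i = 1
      rw [mul_comm]; exact hone i
    map_mul' := by
      intro x y
      funext i
      show c i * b.repr (x * y) i = (c i * b.repr x i) * (c i * b.repr y i)
      rw [hreprmul]; ring
    map_zero' := by funext i; simp
    map_add' := by intro x y; funext i; simp [mul_add]
    commutes' := by
      intro r
      funext i
      show c i * b.repr (algebraMap ℂ U r) i = r
      rw [Algebra.algebraMap_eq_smul_one, map_smul]
      simp only [Finsupp.smul_apply, smul_eq_mul]
      rw [mul_comm r, ← mul_assoc, mul_comm (c i), hone i, one_mul] }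
  have hinj : Function.Injective φ := by
    intro x y hxy
    apply b.repr.injective
    ext i
    have := congrFun hxy i
    simp only [φ, AlgHom.coe_mk] at this
    exact mul_left_cancel₀ (hcne i) this
  have hsurj : Function.Surjective φ := by
    intro y
    refine ⟨∑ i, (y i / c i) • b i, ?_⟩
    funext i
    show c i * b.repr (∑ i, (y i / c i) • b i) i = y i
    rw [Module.Basis.repr_sum_self]
    rw [mul_comm, div_mul_cancel₀ _ (hcne i)]
  have e : U ≃ₐ[ℂ] (Fin μ → ℂ) := AlgEquiv.ofBijective φ ⟨hinj, hsurj⟩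
  exact ⟨isReduced_of_injective e.toRingHom (e.injective), ⟨e⟩⟩
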